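/- Let A be a K-subalgebra of K[x] of codimension one, i.e. the quotient K[x]/A has dimension 1 as a K-vector space. Then either there exists γ ∈ K such that A = {f ∈ K[x] : f'(γ) = 0}, or there exist α, β ∈ K with α ≠ β such that A = {f ∈ K[x] : f(α) = f(β)}. -/

import Mathlib

open Polynomial

theorem codim_one_subalgebra_description
    {K : Type*} [Field K] [IsAlgClosed K] [CharZero K]
    (A : Subalgebra K (Polynomial K))
    (hcodim : Module.finrank K (Polynomial K ⧸ Subalgebra.toSubmodule A) = 1) :
    (∃ γ : K, ∀ f : Polynomial K, f ∈ A ↔ (Polynomial.derivative f).eval γ = 0) ∨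
    (∃ α β : K, α ≠ β ∧ ∀ f : Polynomial K, f ∈ A ↔ f.eval α = f.eval β) := by
  classical
  -- obtain a linear functional with kernel A
  have hfd : FiniteDimensional K (Polynomial K ⧸ Subalgebra.toSubmodule A) :=
    Module.finite_of_finrank_pos (by rw [hcodim]; norm_num)
  obtain ⟨e⟩ : Nonempty ((Polynomial K ⧸ Subalgebra.toSubmodule A) ≃ₗ[K] K) :=
    FiniteDimensional.nonempty_linearEquiv_of_finrank_eq
      (by rw [hcodim, Module.finrank_self])
  set l : Polynomial K →ₗ[K] K :=
    e.toLinearMap ∘ₗ (Subalgebra.toSubmodule A).mkQ with hl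
  have hker : ∀ f : Polynomial K, l f = 0 ↔ f ∈ A := by
    intro f
    constructor
    · intro h
      have : (Subalgebra.toSubmodule A).mkQ f = 0 := by
        have := e.injective (a₁ := (Subalgebra.toSubmodule A).mkQ f) (a₂ := 0)
        simp only [map_zero] at this
        exact this h
      simpa [Submodule.Quotient.mk_eq_zero] using this
    · intro h
      have : (Subalgebra.toSubmodule A).mkQ f = 0 := by
        simpa [Submodule.Quotient.mk_eq_zero] using h
      simp [hl, LinearMap.comp_apply, this]
  have hX : l X ≠ 0 := by
    intro h
    have hXA : (X : Polynomial K) ∈ A := (hker X).mp h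
    have htop : A = ⊤ := by
      have hle : (⊤ : Subalgebra K (Polynomial K)) ≤ A := by
        rw [← Polynomial.adjoin_X (R := K)]
        exact Algebra.adjoin_le (by simpa using hXA)
      exact top_le_iff.mp hle
    have : Subsingleton (Polynomial K ⧸ Subalgebra.toSubmodule A) := by
      rw [Submodule.Quotient.subsingleton_iff]
      rw [htop]; rfl
    rw [Module.finrank_zero_of_subsingleton] at hcodim
    exact zero_ne_one hcodim
  set μ : Polynomial K →ₗ[K] K := (l X)⁻¹ • l with hμ
  have hμker : ∀ f : Polynomial K, μ f = 0 ↔ f ∈ A := by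
    intro f
    rw [← hker f]
    simp only [hμ, LinearMap.smul_apply, smul_eq_mul]
    constructor
    · intro h
      rcases mul_eq_zero.mp h with h | h
      · exact absurd (inv_eq_zero.mp h) hX
      · exact h
    · intro h; rw [h, mul_zero]
  set c : ℕ → K := fun n => μ (X ^ n) with hc
  have hc0 : c 0 = 0 := by
    have h1 : (1 : Polynomial K) ∈ A := A.one_mem
    simpa [hc] using (hμker 1).mpr h1
  have hc1 : c 1 = 1 := by
    simp [hc, hμ, inv_mul_cancel₀ hX]
  -- the elements sₙ = Xⁿ - cₙ·X lie in A
  have hs : ∀ n : ℕ, ((X : Polynomial K) ^ n - C (c n) * X) ∈ A := by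
    intro n
    apply (hμker _).mp
    rw [← smul_eq_C_mul, map_sub, map_smul]
    have : μ X = c 1 * μ X := by rw [hc1, one_mul]
    simp only [smul_eq_mul]
    have hX1 : μ (X : Polynomial K) = 1 := by
      have := hc1; simpa [hc] using this
    rw [hX1, mul_one, sub_self]
  -- multiplicativity relations
  have hmul : ∀ m n : ℕ,
      c (m + n) - c n * c (m + 1) - c m * c (n + 1) + c m * c n * c 2 = 0 := by
    intro m n
    have hmem : ((X : Polynomial K) ^ m - C (c m) * X) *
        ((X : Polynomial K) ^ n - C (c n) * X) ∈ A := A.mul_mem (hs m) (hs n)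
    have hexp : ((X : Polynomial K) ^ m - C (c m) * X) *
        ((X : Polynomial K) ^ n - C (c n) * X) =
        X ^ (m + n) - C (c n) * X ^ (m + 1) - C (c m) * X ^ (n + 1)
          + C (c m) * C (c n) * X ^ 2 := by
      ring
    have := (hμker _).mpr hmem
    rw [hexp] at this
    rw [← C_mul, ← smul_eq_C_mul, ← smul_eq_C_mul, ← smul_eq_C_mul,
      map_add, map_sub, map_sub, map_smul, map_smul, map_smul] at this
    simpa [hc, smul_eq_mul, mul_assoc] using this
  -- the recurrence
  have hrec0 : ∀ n : ℕ, c (n + 2) = c 2 * c (n + 1) - ((c 2) ^ 2 - c 3) * c n := by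
    intro n
    have := hmul 2 n
    rw [show (2 : ℕ) + n = n + 2 by omega, show (2 : ℕ) + 1 = 3 by norm_num] at this
    linear_combination this
  -- find roots α, β of t² - (c 2) t + ((c 2)² - c 3)
  obtain ⟨d, hd⟩ : ∃ d : K, d ^ 2 = (c 2) ^ 2 - 4 * ((c 2) ^ 2 - c 3) := by
    exact IsAlgClosed.exists_pow_nat_eq ((c 2) ^ 2 - 4 * ((c 2) ^ 2 - c 3)) zero_lt_two
  set α : K := (c 2 + d) / 2 with hα
  set β : K := (c 2 - d) / 2 with hβ
  have h2 : (2 : K) ≠ 0 := two_ne_zero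
  have hsum : α + β = c 2 := by rw [hα, hβ]; ring
  have hprod : α * β = (c 2) ^ 2 - c 3 := by
    have h4 : α * β = ((c 2) ^ 2 - d ^ 2) / 4 := by rw [hα, hβ]; ring
    rw [h4, hd]; ring
  have hrec : ∀ n : ℕ, c (n + 2) = (α + β) * c (n + 1) - (α * β) * c n := by
    intro n; rw [hsum, hprod]; exact hrec0 n
  -- μ as a sum over coefficients
  have hμsum : ∀ f : Polynomial K, μ f = f.sum fun n a => a * c n := by
    intro f
    conv_lhs => rw [← Polynomial.sum_C_mul_X_pow_eq f]
    rw [Polynomial.sum_def, Polynomial.sum_def, map_sum]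
    refine Finset.sum_congr rfl fun n _ => ?_
    rw [← smul_eq_C_mul, map_smul, smul_eq_mul]
  by_cases hαβ : α = β
  · -- derivative case
    left
    refine ⟨α, fun f => ?_⟩
    have hcn : ∀ n : ℕ, c (n + 1) = (n + 1 : ℕ) * α ^ n := by
      intro n
      induction n using Nat.twoStepInduction with
      | zero => simpa using hc1
      | one =>
        have : c 2 = α + β := hsum.symm
        rw [this, ← hαβ]; push_cast; ring
      | more k ih1 ih2 =>
        have := hrec (k + 1)
        rw [← hαβ] at this
        rw [show k + 1 + 2 = k + 2 + 1 by ring, this, ih2, ih1]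
        push_cast; ring
    have hμd : μ f = (Polynomial.derivative f).eval α := by
      rw [hμsum, Polynomial.derivative_apply, Polynomial.sum_def,
        Polynomial.sum_def, Polynomial.eval_finset_sum]
      refine Finset.sum_congr rfl fun n _ => ?_
      rcases n with _ | k
      · simp [hc0]
      · simp only [eval_mul, eval_C, eval_pow, eval_X, Nat.succ_sub_one]
        rw [hcn k]
        push_cast; ring
    rw [← hμker f, hμd]
  · -- two points case
    right
    refine ⟨α, β, hαβ, fun f => ?_⟩
    have hcn : ∀ n : ℕ, c n * (α - β) = α ^ n - β ^ n := by
      intro n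
      induction n using Nat.twoStepInduction with
      | zero => simp [hc0]
      | one => simp [hc1]
      | more k ih1 ih2 =>
        rw [show k + 2 = k + 2 by rfl, hrec k]
        have : ((α + β) * c (k + 1) - α * β * c k) * (α - β)
            = (α + β) * (c (k + 1) * (α - β)) - α * β * (c k * (α - β)) := by ring
        rw [this, ih2, ih1]; ring
    have hab : α - β ≠ 0 := sub_ne_zero_of_ne hαβ
    have key : μ f * (α - β) = f.eval α - f.eval β := by
      rw [hμsum, Polynomial.eval_eq_sum, Polynomial.eval_eq_sum,
        Polynomial.sum_def, Polynomial.sum_def, Polynomial.sum_def,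
        Finset.sum_mul, ← Finset.sum_sub_distrib]
      refine Finset.sum_congr rfl fun n _ => ?_
      rw [mul_assoc, hcn n]; ring
    rw [← hμker f]
    constructor
    · intro h
      have := key
      rw [h, zero_mul] at this
      linear_combination -this
    · intro h
      have : μ f * (α - β) = 0 := by rw [key, h, sub_self]
      rcases mul_eq_zero.mp this with h' | h'
      · exact h'
      · exact absurd h' hab
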